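/- Let T and T′ be elimination trees of a connected graph G such that T′ is obtained from T by a single swap of vertices u and v (where u is the parent of v in T). Let U ⊆ V with G[U] connected. If {u, v} ⊄ U, then the projections coincide: T′|_U = T|_U. If {u,v} ⊆ U, then either T′|_U = T|_U, or T′|_U is obtained from T|_U by swapping u and v. -/

import Mathlib

attribute [local instance] Classical.propDecidable

/-- An elimination tree of a connected graph `G`: a rooted tree on the vertex set
(given by a parent function) such that every subtree induces a connected subgraph
and adjacent vertices are comparable.  This is equivalent to the recursive
definition: a root `v` whose children subtrees are elimination trees of the
connected components of `G − v`. -/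
structure ElimTree {V : Type*} (G : SimpleGraph V) where
  root : V
  parent : V → V
  parent_root : parent root = root
  reaches_root : ∀ v, ∃ n, parent^[n] v = root
  connected_des : ∀ v : V, (G.induce {u | ∃ n, parent^[n] u = v}).Connected
  adj_comparable : ∀ u v : V, G.Adj u v →
    (∃ n, parent^[n] u = v) ∨ (∃ n, parent^[n] v = u)

/-- The vertex set `T(v)` of the subtree of `T` rooted at `v` (including `v`). -/
def ElimTree.desSet {V : Type*} {G : SimpleGraph V} (T : ElimTree G) (v : V) : Set V :=
  {u | ∃ n, T.parent^[n] u = v}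

/-- `u` is a strict ancestor of `w` in `T`. -/
def ElimTree.Anc {V : Type*} {G : SimpleGraph V} (T : ElimTree G) (u w : V) : Prop :=
  u ≠ w ∧ w ∈ T.desSet u

/-- `v` is a leaf of `T`. -/
def ElimTree.IsLeaf {V : Type*} {G : SimpleGraph V} (T : ElimTree G) (v : V) : Prop :=
  ∀ w, T.parent w = v → w = v

/-- Vertices u and w lie in the same connected component of H − v,
where H is the subgraph of G induced by the subtree of T rooted at the parent u of v. -/
def SameCompAfter {V : Type*} {G : SimpleGraph V} (T : ElimTree G) (u v w : V) : Prop :=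
  ∃ (hu : u ∈ T.desSet u \ {v}) (hw : w ∈ T.desSet u \ {v}),
    (G.induce (T.desSet u \ {v})).Reachable ⟨u, hu⟩ ⟨w, hw⟩

/-- T' is obtained from T by the swap of u with v, where u is the parent of v in T:
v becomes the parent of u (and takes the place of u), the subtrees rooted at u stay
at u, and a subtree S rooted at a child w of v stays at v unless its vertices lie
in the same connected component as u of H − v, where H is the subgraph induced by
the subtree containing u, v and its subtrees, in which case S moves to u. -/
def SwapRel {V : Type*} {G : SimpleGraph V} (T T' : ElimTree G) (u v : V) : Prop :=
  u ≠ v ∧ T.parent v = u ∧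
  T'.parent u = v ∧
  (u = T.root → T'.root = v ∧ T'.parent v = v) ∧
  (u ≠ T.root → T'.root = T.root ∧ T'.parent v = T.parent u) ∧
  ∀ w : V, w ≠ u → w ≠ v →
    ((T.parent w = v ∧ SameCompAfter T u v w) → T'.parent w = u) ∧
    (¬ (T.parent w = v ∧ SameCompAfter T u v w) → T'.parent w = T.parent w)

/-- TU is the projection of T to U: the elimination tree of the induced subgraph
G[U] preserving the ancestor order of T, characterized by: a is an ancestor of b
in TU iff a is an ancestor of b in T and a, b are connected in G[U] minus the
strict ancestors of a in T. -/
def IsProjection {V : Type*} {G : SimpleGraph V} (T : ElimTree G) (U : Set V)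
    (TU : ElimTree (G.induce U)) : Prop :=
  ∀ a b : U, TU.Anc a b ↔
    (T.Anc (a : V) (b : V) ∧
      ∃ (ha : (a : V) ∈ U \ {w : V | T.Anc w (a : V)})
        (hb : (b : V) ∈ U \ {w : V | T.Anc w (a : V)}),
        (G.induce (U \ {w : V | T.Anc w (a : V)})).Reachable ⟨(a : V), ha⟩ ⟨(b : V), hb⟩)

section
variable {V : Type*} {G : SimpleGraph V}

/-- Reachability within an induced subgraph, phrased on the ambient type. -/
def MyReach (G : SimpleGraph V) (S : Set V) (a b : V) : Prop :=
  ∃ (ha : a ∈ S) (hb : b ∈ S), (G.induce S).Reachable ⟨a, ha⟩ ⟨b, hb⟩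

lemma induce_adj' {S : Set V} {x y : ↥S} (h : (G.induce S).Adj x y) : G.Adj ↑x ↑y := h

lemma induce_adj_mk {S : Set V} {x y : V} (hx : x ∈ S) (hy : y ∈ S) (h : G.Adj x y) :
    (G.induce S).Adj ⟨x, hx⟩ ⟨y, hy⟩ := h

/-- Transfer a walk whose support lies in `S'` to reachability in `G.induce S'`. -/
lemma walk_transfer {S S' : Set V} : ∀ {x y : ↥S} (p : (G.induce S).Walk x y),
    (∀ z ∈ p.support, (z : V) ∈ S') →
    ∀ (hx : (x : V) ∈ S') (hy : (y : V) ∈ S'),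
      (G.induce S').Reachable ⟨x, hx⟩ ⟨y, hy⟩ := by
  intro x y p
  induction p with
  | nil => intro _ hx hy; exact SimpleGraph.Reachable.refl _
  | cons h p ih =>
    rename_i a b c
    intro hsup hx hy
    have hb : (b : V) ∈ S' := hsup b (by simp [SimpleGraph.Walk.support_cons])
    have hr := ih (fun z hz => hsup z (by simp [SimpleGraph.Walk.support_cons, hz])) hb hy
    exact (SimpleGraph.Adj.reachable (induce_adj_mk hx hb (induce_adj' h))).trans hr

lemma myReach_refl {S : Set V} {a : V} (ha : a ∈ S) : MyReach G S a a :=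
  ⟨ha, ha, SimpleGraph.Reachable.refl _⟩

lemma myReach_symm {S : Set V} {a b : V} (h : MyReach G S a b) : MyReach G S b a := by
  obtain ⟨ha, hb, hr⟩ := h; exact ⟨hb, ha, hr.symm⟩

lemma myReach_trans {S : Set V} {a b c : V} (h1 : MyReach G S a b) (h2 : MyReach G S b c) :
    MyReach G S a c := by
  obtain ⟨ha, hb, hr1⟩ := h1; obtain ⟨hb', hc, hr2⟩ := h2
  exact ⟨ha, hc, hr1.trans hr2⟩

lemma myReach_mem_left {S : Set V} {a b : V} (h : MyReach G S a b) : a ∈ S := h.1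

lemma myReach_mem_right {S : Set V} {a b : V} (h : MyReach G S a b) : b ∈ S := by
  obtain ⟨_, hb, _⟩ := h; exact hb

lemma myReach_step {S : Set V} {a b c : V} (h : MyReach G S a b) (hadj : G.Adj b c)
    (hc : c ∈ S) : MyReach G S a c :=
  myReach_trans h ⟨myReach_mem_right h, hc, (induce_adj_mk _ hc hadj).reachable⟩

/-- Induction principle along reachability. -/
lemma myReach_rec {S : Set V} {a b : V} (h : MyReach G S a b) {P : V → Prop} (h0 : P a)
    (hs : ∀ x y, x ∈ S → y ∈ S → P x → G.Adj x y → P y) : P b := by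
  obtain ⟨ha, hb, hr⟩ := h
  obtain ⟨p⟩ := hr
  have : ∀ (x y : ↥S) (p : (G.induce S).Walk x y), P ↑x → P ↑y := by
    intro x y p
    induction p with
    | nil => exact id
    | cons hadj q ih =>
      rename_i a' b' c'
      intro hx
      exact ih (hs _ _ a'.2 b'.2 hx (induce_adj' hadj))
  exact this _ _ p h0

/-- Transfer reachability to another set containing everything reachable. -/
lemma myReach_transfer {S S' : Set V} {a b : V} (h : MyReach G S a b)
    (hsub : ∀ x, MyReach G S a x → x ∈ S') : MyReach G S' a b := by
  have := myReach_rec (P := fun x => MyReach G S a x ∧ MyReach G S' a x) h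
    ⟨myReach_refl h.1, myReach_refl (hsub a (myReach_refl h.1))⟩
    (fun x y hx hy hP hadj => ⟨myReach_step hP.1 hadj hy,
      myReach_step hP.2 hadj (hsub y (myReach_step hP.1 hadj hy))⟩)
  exact this.2

lemma myReach_mono {S S' : Set V} {a b : V} (hsub : S ⊆ S') (h : MyReach G S a b) :
    MyReach G S' a b :=
  myReach_transfer h (fun x hx => hsub (myReach_mem_right hx))

end
section
variable {V : Type*} {G : SimpleGraph V}

/-- The set of strict ancestors of `a`. -/
def AncS (T : ElimTree G) (a : V) : Set V := {w | T.Anc w a}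

variable (T : ElimTree G)

lemma mem_desSet_self (a : V) : a ∈ T.desSet a := ⟨0, rfl⟩

lemma desSet_trans {a b c : V} (h1 : c ∈ T.desSet b) (h2 : b ∈ T.desSet a) :
    c ∈ T.desSet a := by
  obtain ⟨n, hn⟩ := h1; obtain ⟨m, hm⟩ := h2
  exact ⟨m + n, by rw [Function.iterate_add_apply, hn, hm]⟩

lemma iterate_root (n : ℕ) : T.parent^[n] T.root = T.root := by
  induction n with
  | zero => rfl
  | succ n ih => rw [Function.iterate_succ_apply', ih, T.parent_root]

lemma eq_root_of_cycle {a : V} {n : ℕ} (hn : n ≠ 0) (h : T.parent^[n] a = a) : a = T.root := by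
  obtain ⟨N, hN⟩ := T.reaches_root a
  have hcyc : ∀ j, T.parent^[n * j] a = a := by
    intro j
    induction j with
    | zero => rfl
    | succ j ih => rw [Nat.mul_succ, Function.iterate_add_apply, h, ih]
  have : T.parent^[n * N] a = T.root := by
    have h2 : n * N = (n * N - N) + N := by
      have : n * N ≥ N := Nat.le_mul_of_pos_left N (Nat.pos_of_ne_zero hn)
      omega
    rw [h2, Function.iterate_add_apply, hN, iterate_root]
  rw [hcyc N] at this; exact this

lemma desSet_antisymm {a b : V} (h1 : a ∈ T.desSet b) (h2 : b ∈ T.desSet a) : a = b := by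
  obtain ⟨n, hn⟩ := h1; obtain ⟨m, hm⟩ := h2
  rcases Nat.eq_zero_or_pos (m + n) with h | h
  · have : m = 0 := by omega
    rw [this] at hm; exact hm.symm
  · have hc : T.parent^[m + n] a = a := by rw [Function.iterate_add_apply, hn, hm]
    have ha := eq_root_of_cycle T (by omega) hc
    have hc2 : T.parent^[n + m] b = b := by rw [Function.iterate_add_apply, hm, hn]
    have hb := eq_root_of_cycle T (by omega) hc2
    rw [ha, hb]

lemma parent_eq_self_iff {a : V} : T.parent a = a ↔ a = T.root := by
  constructor
  · intro h
    obtain ⟨N, hN⟩ := T.reaches_root a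
    have : ∀ n, T.parent^[n] a = a := by
      intro n; induction n with
      | zero => rfl
      | succ n ih => rw [Function.iterate_succ_apply', ih, h]
    rw [← hN, this]
  · intro h; rw [h]; exact T.parent_root

lemma mem_desSet_parent (a : V) : a ∈ T.desSet (T.parent a) := ⟨1, rfl⟩

lemma desSet_of_ne {a w : V} (h : a ∈ T.desSet w) (hne : a ≠ w) :
    T.parent a ∈ T.desSet w := by
  obtain ⟨n, hn⟩ := h
  cases n with
  | zero => exact absurd hn hne
  | succ n => exact ⟨n, by rw [Function.iterate_succ_apply] at hn; exact hn⟩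

/-- ancestors of a common vertex are linearly ordered -/
lemma anc_linear {a b x : V} (h1 : x ∈ T.desSet a) (h2 : x ∈ T.desSet b) :
    a ∈ T.desSet b ∨ b ∈ T.desSet a := by
  obtain ⟨n, hn⟩ := h1; obtain ⟨m, hm⟩ := h2
  rcases le_total n m with h | h
  · left
    refine ⟨m - n, ?_⟩
    rw [← hn, ← Function.iterate_add_apply]
    rw [show m - n + n = m by omega, hm]
  · right
    refine ⟨n - m, ?_⟩
    rw [← hm, ← Function.iterate_add_apply]
    rw [show n - m + m = n by omega, hn]

lemma anc_antisymm {a b : V} (h1 : T.Anc a b) (h2 : T.Anc b a) : False :=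
  h1.1 (desSet_antisymm T h2.2 h1.2)

lemma not_anc_self (a : V) : ¬ T.Anc a a := fun h => h.1 rfl

lemma anc_parent {a : V} (h : a ≠ T.root) : T.Anc (T.parent a) a :=
  ⟨fun he => h ((parent_eq_self_iff T).mp he), mem_desSet_parent T a⟩

lemma anc_min {a w : V} (h : T.Anc w a) : w = T.parent a ∨ T.Anc w (T.parent a) := by
  have hd := desSet_of_ne T h.2 (Ne.symm h.1)
  rcases Classical.em (w = T.parent a) with he | he
  · exact Or.inl he
  · exact Or.inr ⟨he, hd⟩

lemma parent_unique {a p : V} (ha : a ≠ T.root) (h1 : T.Anc p a)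
    (h2 : ∀ w, T.Anc w a → w = p ∨ T.Anc w p) : T.parent a = p := by
  rcases anc_min T h1 with he | hanc
  · exact he.symm
  · rcases h2 (T.parent a) (anc_parent T ha) with he | hanc2
    · exact he
    · exact (anc_antisymm T hanc hanc2).elim

lemma anc_root {a : V} (h : a ≠ T.root) : T.Anc T.root a :=
  ⟨fun he => h he.symm, T.reaches_root a⟩

lemma no_anc_root (w : V) : ¬ T.Anc w T.root := by
  rintro ⟨hne, n, hn⟩
  rw [iterate_root] at hn
  exact hne hn.symm

lemma root_char {r : V} (h : ∀ w, ¬ T.Anc w r) : r = T.root := by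
  by_contra hne
  exact h T.root (anc_root T hne)

lemma tree_ext {T1 T2 : ElimTree G} (hroot : T1.root = T2.root)
    (hparent : T1.parent = T2.parent) : T1 = T2 := by
  cases T1; cases T2
  simp only at hroot hparent
  subst hroot; subst hparent
  rfl

/-- Two elimination trees with the same ancestor relation are equal. -/
lemma tree_eq_of_anc {T1 T2 : ElimTree G} (h : ∀ a b, T1.Anc a b ↔ T2.Anc a b) :
    T1 = T2 := by
  have hroot : T1.root = T2.root :=
    root_char T2 (fun w hw => no_anc_root T1 w ((h w T1.root).mpr hw))
  have hparent : T1.parent = T2.parent := by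
    funext a
    rcases Classical.em (a = T1.root) with hr | hr
    · rw [hr, T1.parent_root, hroot, T2.parent_root]
    · have hr2 : a ≠ T2.root := hroot ▸ hr
      have h1 : T1.Anc (T1.parent a) a := anc_parent T1 hr
      have h2 : ∀ w, T2.Anc w a → w = T1.parent a ∨ T2.Anc w (T1.parent a) := by
        intro w hw
        rcases anc_min T1 ((h w a).mpr hw) with he | he
        · exact Or.inl he
        · exact Or.inr ((h w (T1.parent a)).mp he)
      exact (parent_unique T2 hr2 ((h _ a).mp h1) h2).symm ▸ rfl
  exact tree_ext hroot hparent
end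
section
variable {V : Type*} {G : SimpleGraph V}

/-- Everything reachable from `a` while avoiding strict ancestors of `a`
lies in the subtree of `a`. -/
lemma reach_desSet (T : ElimTree G) {S : Set V} {a b : V}
    (hdisj : ∀ w ∈ S, ¬ T.Anc w a) (h : MyReach G S a b) : b ∈ T.desSet a := by
  refine myReach_rec h (mem_desSet_self T a) ?_
  intro x y _ hyS hx hadj
  rcases T.adj_comparable x y hadj with hc | hc
  · -- x ∈ desSet y, i.e. y ancestor of x
    rcases anc_linear T hx hc with h1 | h1
    · -- a ∈ desSet y
      rcases Classical.em (y = a) with he | he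
      · rw [he]; exact mem_desSet_self T a
      · exact absurd ⟨he, h1⟩ (hdisj y hyS)
    · exact h1
  · -- y ∈ desSet x
    exact desSet_trans T hc hx

/-- Transfer reachability while removing a vertex outside the subtree. -/
lemma myReach_avoid (T : ElimTree G) {S : Set V} {a b c : V}
    (hdisj : ∀ w ∈ S, ¬ T.Anc w a) (hc : c ∉ T.desSet a) (h : MyReach G S a b) :
    MyReach G (S \ {c}) a b := by
  refine myReach_transfer h ?_
  intro x hx
  refine ⟨myReach_mem_right hx, ?_⟩
  intro hxc
  rw [Set.mem_singleton_iff] at hxc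
  exact hc (hxc ▸ reach_desSet T hdisj hx)

/-- Reformulation of `IsProjection` using `MyReach`. -/
lemma proj_anc_iff {U : Set V} {T : ElimTree G} {TU : ElimTree (G.induce U)}
    (hTU : IsProjection T U TU) (a b : U) :
    TU.Anc a b ↔ ((a : V) ≠ (b : V) ∧ MyReach G (U \ AncS T (a : V)) (a : V) (b : V)) := by
  constructor
  · intro h
    obtain ⟨hanc, ha, hb, hr⟩ := (hTU a b).mp h
    exact ⟨hanc.1, ha, hb, hr⟩
  · rintro ⟨hne, hreach⟩
    refine (hTU a b).mpr ⟨⟨hne, ?_⟩, ?_⟩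
    · exact reach_desSet T (fun w hw => hw.2) hreach
    · obtain ⟨ha, hb, hr⟩ := hreach
      exact ⟨ha, hb, hr⟩

end
section
open SimpleGraph
variable {V : Type*} {G : SimpleGraph V}

/-- If `b` is not reachable from `c` avoiding `a`, then `a` reaches `b` avoiding `c`. -/
lemma myReach_split {S : Set V} {a b c : V} (h : MyReach G S a b)
    (hnc : ¬ MyReach G (S \ {a}) c b) (hca : c ≠ a) : MyReach G (S \ {c}) a b := by
  obtain ⟨ha, hb, hr⟩ := h
  obtain ⟨w⟩ := hr
  let p := w.toPath
  by_cases hc : ∃ hcS : c ∈ S, (⟨c, hcS⟩ : ↥S) ∈ p.1.support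
  · exfalso
    obtain ⟨hcS, hmem⟩ := hc
    set q := p.1.dropUntil ⟨c, hcS⟩ hmem with hq
    have hspec := SimpleGraph.Walk.take_spec p.1 hmem
    have hnodup := p.2.support_nodup
    have hsupp : p.1.support
        = (p.1.takeUntil ⟨c, hcS⟩ hmem).support ++ q.support.tail := by
      rw [← SimpleGraph.Walk.support_append, hspec]
    have hastart : (⟨a, ha⟩ : ↥S) ∈ (p.1.takeUntil ⟨c, hcS⟩ hmem).support :=
      SimpleGraph.Walk.start_mem_support _
    have hanotin : (⟨a, ha⟩ : ↥S) ∉ q.support := by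
      rw [hsupp] at hnodup
      have hdisj := (List.nodup_append'.mp hnodup).2.2
      intro hmem'
      rw [SimpleGraph.Walk.support_eq_cons q] at hmem'
      rcases List.mem_cons.mp hmem' with he | ht
      · exact hca (congrArg Subtype.val he).symm
      · exact hdisj hastart ht
    have hall : ∀ z ∈ q.support, (z : V) ∈ S \ {a} := by
      intro z hz
      refine ⟨z.2, fun hza => ?_⟩
      rw [Set.mem_singleton_iff] at hza
      exact hanotin (by rwa [show z = (⟨a, ha⟩ : ↥S) from Subtype.ext hza] at hz)
    have hbS : b ∈ S \ {a} := hall _ (SimpleGraph.Walk.end_mem_support q)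
    have hcS' : c ∈ S \ {a} := hall _ (SimpleGraph.Walk.start_mem_support q)
    exact hnc ⟨hcS', hbS, walk_transfer q hall hcS' hbS⟩
  · have hall : ∀ z ∈ p.1.support, (z : V) ∈ S \ {c} := by
      intro z hz
      refine ⟨z.2, fun hzc => ?_⟩
      rw [Set.mem_singleton_iff] at hzc
      exact hc ⟨hzc ▸ z.2, by rwa [show (⟨c, hzc ▸ z.2⟩ : ↥S) = z from Subtype.ext hzc.symm]⟩
    have haS : a ∈ S \ {c} := hall _ (SimpleGraph.Walk.start_mem_support _)
    have hbS : b ∈ S \ {c} := hall _ (SimpleGraph.Walk.end_mem_support _)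
    exact ⟨haS, hbS, walk_transfer p.1 hall haS hbS⟩

/-- Reachability in a doubly-induced subgraph equals ambient reachability. -/
lemma myReach_di {U : Set V} {W : Set ↥U} {p q : ↥U} :
    MyReach (G.induce U) W p q ↔
      MyReach G {x : V | ∃ h : x ∈ U, (⟨x, h⟩ : ↥U) ∈ W} (p : V) (q : V) := by
  constructor
  · intro h
    have hp : (p : V) ∈ {x : V | ∃ h : x ∈ U, (⟨x, h⟩ : ↥U) ∈ W} := ⟨p.2, h.1⟩
    refine myReach_rec h (P := fun z : ↥U => MyReach G _ (p : V) (z : V)) (myReach_refl hp) ?_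
    intro x y hx hy hPx hadj
    exact myReach_step hPx (induce_adj' hadj) ⟨y.2, hy⟩
  · intro h
    have h0 : ∃ (hpU : (p : V) ∈ U) (_ : (⟨(p : V), hpU⟩ : ↥U) ∈ W),
        MyReach (G.induce U) W p ⟨(p : V), hpU⟩ := by
      obtain ⟨⟨hpU, hpW⟩, _, _⟩ := h
      exact ⟨p.2, hpW, myReach_refl hpW⟩
    have hres := myReach_rec h (P := fun x : V => ∃ (hxU : x ∈ U)
        (_ : (⟨x, hxU⟩ : ↥U) ∈ W), MyReach (G.induce U) W p ⟨x, hxU⟩) h0 ?_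
    · obtain ⟨hqU, hqW, hr⟩ := hres
      rwa [show (⟨(q : V), hqU⟩ : ↥U) = q from Subtype.ext rfl] at hr
    · rintro x y hx ⟨hyU, hyW⟩ ⟨hxU, hxW, hrx⟩ hadj
      exact ⟨hyU, hyW, myReach_step hrx (induce_adj_mk hxU hyU hadj) hyW⟩

end
section
variable {V : Type*} {G : SimpleGraph V}

/-- Ancestors of `x`, including `x` itself. -/
def ASelf (T : ElimTree G) (x : V) : Set V := {w | x ∈ T.desSet w}

lemma mem_aself_self (T : ElimTree G) (x : V) : x ∈ ASelf T x := mem_desSet_self T x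

lemma aself_cons (T : ElimTree G) (x : V) :
    ASelf T x = {x} ∪ ASelf T (T.parent x) := by
  ext w
  constructor
  · rintro ⟨n, hn⟩
    cases n with
    | zero => exact Or.inl hn.symm
    | succ n =>
      right
      exact ⟨n, by rw [Function.iterate_succ_apply] at hn; exact hn⟩
  · rintro (hw | ⟨n, hn⟩)
    · exact hw ▸ mem_aself_self T x
    · exact ⟨n + 1, by rw [Function.iterate_succ_apply]; exact hn⟩

lemma aself_sub (T : ElimTree G) {x y : V} (h : y ∈ ASelf T x) :
    ASelf T y ⊆ ASelf T x := fun z hz => desSet_trans T h hz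

lemma ancs_eq (T : ElimTree G) (x : V) : AncS T x = ASelf T x \ {x} := by
  ext w
  constructor
  · rintro ⟨hne, hd⟩; exact ⟨hd, fun he => hne (Set.mem_singleton_iff.mp he)⟩
  · rintro ⟨hd, hne⟩; exact ⟨fun he => hne he, hd⟩

section Swap

variable {T T' : ElimTree G} {u v : V} (hswap : SwapRel T T' u v)
/-- Ancestors of the parent of `u` (empty if `u` is the root). -/
def BSet (T : ElimTree G) (u : V) : Set V :=
  if u = T.root then (∅ : Set V) else ASelf T (T.parent u)

lemma pu_not_des (hu : u ≠ T.root) : T.parent u ∉ T.desSet u := by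
  rintro ⟨n, hn⟩
  exact hu (eq_root_of_cycle T (n := n + 1) (by omega)
    (by rw [Function.iterate_succ_apply]; exact hn))

lemma u_not_B : u ∉ BSet T u := by
  unfold BSet
  split
  · exact Set.notMem_empty u
  · next hu => exact fun h => pu_not_des hu h

lemma aselfT_u : ASelf T u = {u} ∪ BSet T u := by
  unfold BSet
  split
  · next hu =>
    ext w
    simp only [Set.union_empty, Set.mem_singleton_iff]
    constructor
    · rintro ⟨n, hn⟩; rw [hu] at hn ⊢; rw [iterate_root] at hn; exact hn.symm
    · rintro rfl; exact mem_aself_self T w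
  · exact aself_cons T u

lemma ancsT_u : AncS T u = BSet T u := by
  rw [ancs_eq, aselfT_u]
  ext w
  simp only [Set.mem_diff, Set.mem_union, Set.mem_singleton_iff]
  constructor
  · rintro ⟨(rfl | hw), hne⟩
    · exact absurd rfl hne
    · exact hw
  · intro hw
    exact ⟨Or.inr hw, fun he => u_not_B (he ▸ hw)⟩

include hswap

lemma hPv : T.parent v = u := hswap.2.1
lemma hP'u : T'.parent u = v := hswap.2.2.1
lemma huv : u ≠ v := hswap.1

lemma v_mem_des_u : v ∈ T.desSet u := by
  rw [← hPv hswap]; exact mem_desSet_parent T v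

lemma des_v_sub : T.desSet v ⊆ T.desSet u := fun z hz =>
  desSet_trans T hz (v_mem_des_u hswap)

lemma v_not_B : v ∉ BSet T u := by
  unfold BSet
  split
  · exact Set.notMem_empty v
  · next hu =>
    intro h
    exact pu_not_des hu (desSet_trans (G := G) (T := T) h (v_mem_des_u hswap))

lemma iter_eq (x : V) (hx : x ∉ T.desSet u) : ∀ n, T'.parent^[n] x = T.parent^[n] x := by
  intro n
  induction n with
  | zero => rfl
  | succ n ih =>
    rw [Function.iterate_succ_apply', Function.iterate_succ_apply', ih]
    set y := T.parent^[n] x with hy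
    have hxy : x ∈ T.desSet y := ⟨n, rfl⟩
    have hyu : y ≠ u := fun he => hx (he ▸ hxy)
    have hyv : y ≠ v := fun he => hx (des_v_sub hswap (he ▸ hxy))
    have hPy : T.parent y ≠ v := by
      intro he
      exact hx (des_v_sub hswap (he ▸ ⟨n + 1, by rw [Function.iterate_succ_apply']⟩))
    exact (hswap.2.2.2.2.2 y hyu hyv).2 (fun hh => hPy hh.1)

lemma aself_eq_of_not_des (x : V) (hx : x ∉ T.desSet u) : ASelf T' x = ASelf T x := by
  ext w
  constructor
  · rintro ⟨n, hn⟩; exact ⟨n, by rw [← iter_eq hswap x hx]; exact hn⟩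
  · rintro ⟨n, hn⟩; exact ⟨n, by rw [iter_eq hswap x hx]; exact hn⟩

lemma aselfT_v : ASelf T v = {v} ∪ ({u} ∪ BSet T u) := by
  rw [aself_cons T v, hPv hswap, aselfT_u]

lemma aselfT'_v : ASelf T' v = {v} ∪ BSet T u := by
  rcases Classical.em (u = T.root) with hu | hu
  · have hPv' : T'.parent v = v := (hswap.2.2.2.1 hu).2
    have : ∀ n, T'.parent^[n] v = v := by
      intro n; induction n with
      | zero => rfl
      | succ n ih => rw [Function.iterate_succ_apply', ih, hPv']
    unfold BSet
    rw [if_pos hu]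
    ext w
    simp only [Set.union_empty, Set.mem_singleton_iff]
    constructor
    · rintro ⟨n, hn⟩; rw [this] at hn; exact hn.symm
    · rintro rfl; exact mem_aself_self T' w
  · have hPv' : T'.parent v = T.parent u := (hswap.2.2.2.2.1 hu).2
    rw [aself_cons T' v, hPv', aself_eq_of_not_des hswap _ (pu_not_des hu)]
    unfold BSet
    rw [if_neg hu]

lemma aselfT'_u : ASelf T' u = {u} ∪ ({v} ∪ BSet T u) := by
  rw [aself_cons T' u, hP'u hswap, aselfT'_v hswap]

/-- Main classification of how ancestor sets change under the swap. -/
lemma s3aux : ∀ (n : ℕ) (x : V), x ≠ u → x ≠ v → T.parent^[n] x = u →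
    ASelf T' x = ASelf T x ∨
    (ASelf T' x = ASelf T x ∪ {v} ∧ u ∈ ASelf T x) ∨
    (ASelf T' x = ASelf T x \ {u} ∧ v ∈ ASelf T x) := by
  intro n
  induction n with
  | zero => intro x hxu _ hn; exact absurd hn hxu
  | succ n ih =>
    intro x hxu hxv hn
    rw [Function.iterate_succ_apply] at hn
    have hclause := hswap.2.2.2.2.2 x hxu hxv
    rcases Classical.em (T.parent x = u) with hPx | hPx
    · have hP'x : T'.parent x = T.parent x :=
        hclause.2 (fun hh => (huv hswap) (hPx ▸ hh.1.symm ▸ rfl))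
      right; left
      constructor
      · rw [aself_cons T' x, hP'x, hPx, aselfT'_u hswap, aself_cons T x, hPx, aselfT_u]
        ext w
        simp only [Set.mem_union, Set.mem_singleton_iff]
        tauto
      · rw [aself_cons T x, hPx, aselfT_u]
        simp
    · rcases Classical.em (T.parent x = v) with hPxv | hPxv
      · rcases Classical.em (SameCompAfter T u v x) with hm | hm
        · have hP'x : T'.parent x = u := hclause.1 ⟨hPxv, hm⟩
          left
          rw [aself_cons T' x, hP'x, aselfT'_u hswap, aself_cons T x, hPxv, aselfT_v hswap]
          ext w
          simp only [Set.mem_union, Set.mem_singleton_iff]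
          tauto
        · have hP'x : T'.parent x = T.parent x := hclause.2 (fun hh => hm hh.2)
          right; right
          have hxA : ASelf T x = {x} ∪ ({v} ∪ ({u} ∪ BSet T u)) := by
            rw [aself_cons T x, hPxv, aselfT_v hswap]
          constructor
          · rw [aself_cons T' x, hP'x, hPxv, aselfT'_v hswap, hxA]
            ext w
            simp only [Set.mem_union, Set.mem_singleton_iff, Set.mem_diff]
            constructor
            · rintro (rfl | (rfl | hw))
              · exact ⟨Or.inl rfl, fun he => hxu (Set.mem_singleton_iff.mp he)⟩
              · exact ⟨Or.inr (Or.inl rfl), fun he => (huv hswap) (Set.mem_singleton_iff.mp he).symm⟩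
              · exact ⟨Or.inr (Or.inr (Or.inr hw)), fun he => u_not_B ((Set.mem_singleton_iff.mp he) ▸ hw)⟩
            · rintro ⟨(rfl | (rfl | (rfl | hw))), hne⟩
              · exact Or.inl rfl
              · exact Or.inr (Or.inl rfl)
              · exact (by simpa using hne : False).elim
              · exact Or.inr (Or.inr hw)
          · rw [hxA]; simp
      · -- parent x is neither u nor v
        have hy : T.parent^[n] (T.parent x) = u := hn
        have hP'x : T'.parent x = T.parent x := hclause.2 (fun hh => hPxv hh.1)
        rcases ih (T.parent x) hPx hPxv hy with hcase | ⟨he, hu'⟩ | ⟨he, hv'⟩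
        · left
          rw [aself_cons T' x, hP'x, hcase, aself_cons T x]
        · right; left
          constructor
          · rw [aself_cons T' x, hP'x, he, aself_cons T x]
            ext w
            simp only [Set.mem_union, Set.mem_singleton_iff]
            tauto
          · rw [aself_cons T x]; exact Or.inr hu'
        · right; right
          constructor
          · rw [aself_cons T' x, hP'x, he, aself_cons T x]
            ext w
            simp only [Set.mem_union, Set.mem_singleton_iff, Set.mem_diff]
            constructor
            · rintro (rfl | ⟨hw, hne⟩)
              · exact ⟨Or.inl rfl, fun hc => hxu (Set.mem_singleton_iff.mp hc)⟩
              · exact ⟨Or.inr hw, hne⟩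
            · rintro ⟨(rfl | hw), hne⟩
              · exact Or.inl rfl
              · exact Or.inr ⟨hw, hne⟩
          · rw [aself_cons T x]; exact Or.inr hv'

lemma s3 (x : V) (hxu : x ≠ u) (hxv : x ≠ v) :
    ASelf T' x = ASelf T x ∨
    (ASelf T' x = ASelf T x ∪ {v} ∧ u ∈ ASelf T x) ∨
    (ASelf T' x = ASelf T x \ {u} ∧ v ∈ ASelf T x) := by
  rcases Classical.em (x ∈ T.desSet u) with hdes | hdes
  · obtain ⟨n, hn⟩ := hdes
    exact s3aux hswap n x hxu hxv hn
  · exact Or.inl (aself_eq_of_not_des hswap x hdes)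

lemma s4 (x : V) : ASelf T' x ⊆ ASelf T x ∪ {v} := by
  rcases Classical.em (x = u) with he | hxu
  · subst he
    rw [aselfT'_u hswap, aselfT_u]
    intro w hw
    simp only [Set.mem_union, Set.mem_singleton_iff] at hw ⊢
    tauto
  · rcases Classical.em (x = v) with he | hxv
    · subst he
      rw [aselfT'_v hswap, aselfT_v hswap]
      intro w hw
      simp only [Set.mem_union, Set.mem_singleton_iff] at hw ⊢
      tauto
    · rcases s3 hswap x hxu hxv with hc | ⟨hc, _⟩ | ⟨hc, _⟩ <;> rw [hc] <;> intro w hw <;>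
        first
        | exact Or.inl hw
        | exact hw
        | exact Or.inl hw.1

lemma ancsT_v : AncS T v = {u} ∪ BSet T u := by
  rw [ancs_eq, aselfT_v hswap]
  ext w
  simp only [Set.mem_diff, Set.mem_union, Set.mem_singleton_iff]
  constructor
  · rintro ⟨(rfl | hw), hne⟩
    · exact absurd rfl hne
    · exact hw
  · rintro (rfl | hw)
    · exact ⟨Or.inr (Or.inl rfl), fun he => huv hswap he⟩
    · exact ⟨Or.inr (Or.inr hw), fun he => v_not_B hswap (he ▸ hw)⟩

lemma ancsT'_v : AncS T' v = BSet T u := by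
  rw [ancs_eq, aselfT'_v hswap]
  ext w
  simp only [Set.mem_diff, Set.mem_union, Set.mem_singleton_iff]
  constructor
  · rintro ⟨(rfl | hw), hne⟩
    · exact absurd rfl hne
    · exact hw
  · intro hw
    exact ⟨Or.inr hw, fun he => v_not_B hswap (he ▸ hw)⟩

lemma ancsT'_u : AncS T' u = {v} ∪ BSet T u := by
  rw [ancs_eq, aselfT'_u hswap]
  ext w
  simp only [Set.mem_diff, Set.mem_union, Set.mem_singleton_iff]
  constructor
  · rintro ⟨(rfl | hw), hne⟩
    · exact absurd rfl hne
    · exact hw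
  · rintro (rfl | hw)
    · exact ⟨Or.inr (Or.inl rfl), fun he => huv hswap he.symm⟩
    · exact ⟨Or.inr (Or.inr hw), fun he => u_not_B (he ▸ hw)⟩

end Swap
end
section
variable {V : Type*} {G : SimpleGraph V}

section Swap
variable {T T' : ElimTree G} {u v : V} (hswap : SwapRel T T' u v)
include hswap

lemma B_facts {w : V} (hw : w ∈ BSet T u) : u ≠ T.root ∧ T.parent u ∈ T.desSet w := by
  unfold BSet at hw
  split at hw
  · exact absurd hw (Set.notMem_empty w)
  · next hu => exact ⟨hu, hw⟩

omit hswap in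
lemma B_not_des {w : V} (hw : w ∈ BSet T u) : w ∉ T.desSet u := by
  intro hdes
  obtain ⟨hu, hPu⟩ : u ≠ T.root ∧ T.parent u ∈ T.desSet w := by
    unfold BSet at hw
    split at hw
    · exact absurd hw (Set.notMem_empty w)
    · next hu => exact ⟨hu, hw⟩
  exact pu_not_des hu (desSet_trans T hPu hdes)

omit hswap in
lemma anc_of_B {w : V} (hw : w ∈ BSet T u) : T.Anc w u := by
  obtain ⟨hu, hPu⟩ : u ≠ T.root ∧ T.parent u ∈ T.desSet w := by
    unfold BSet at hw
    split at hw
    · exact absurd hw (Set.notMem_empty w)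
    · next hu => exact ⟨hu, hw⟩
  refine ⟨fun he => ?_, desSet_trans T (mem_desSet_parent T u) hPu⟩
  exact B_not_des hw (he ▸ mem_desSet_self T u)

omit hswap in
lemma anc_sub {G' : SimpleGraph V} {T0 : ElimTree G'} {w u0 : V} (hw : T0.Anc w u0) :
    AncS T0 w ⊆ AncS T0 u0 := by
  rintro z ⟨hzw, hdz⟩
  refine ⟨fun he => ?_, desSet_trans T0 hw.2 hdz⟩
  subst he
  exact hw.1 (desSet_antisymm T0 hdz hw.2)

lemma ancs_B_eq {w : V} (hw : w ∈ BSet T u) : AncS T' w = AncS T w := by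
  rw [ancs_eq, ancs_eq, aself_eq_of_not_des hswap w (B_not_des hw)]

/-- `v` is not below `z` when `u` is above `z`. -/
lemma c2_v_not_des {z : V} (hz_u : z ≠ u) (hz_v : z ≠ v) (hu' : u ∈ ASelf T z) :
    v ∉ T.desSet z := by
  intro hdes
  have hz : z ∈ ASelf T v := hdes
  rw [aselfT_v hswap] at hz
  rcases hz with hz | hz | hz
  · exact hz_v (Set.mem_singleton_iff.mp hz)
  · exact hz_u (Set.mem_singleton_iff.mp hz)
  · obtain ⟨hroot, hPu⟩ := B_facts hswap hz
    exact pu_not_des hroot (desSet_trans T hPu hu')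

/-- `u` is not below `z` in `T'` when `v` is above `z` in `T`. -/
lemma c3_u_not_des' {z : V} (hz_u : z ≠ u) (hz_v : z ≠ v) (hv' : v ∈ ASelf T z) :
    u ∉ T'.desSet z := by
  intro hdes
  have hz : z ∈ ASelf T' u := hdes
  rw [aselfT'_u hswap] at hz
  rcases hz with hz | hz | hz
  · exact hz_u (Set.mem_singleton_iff.mp hz)
  · exact hz_v (Set.mem_singleton_iff.mp hz)
  · obtain ⟨hroot, hPu⟩ := B_facts hswap hz
    exact pu_not_des hroot (desSet_trans T hPu (des_v_sub hswap hv'))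

/-- The key conversion: for `z ∉ {u,v}`, restricted reachability from `z` is
the same for `T` and `T'`. -/
lemma conv_reach (U : Set V) {z : V} (hz_u : z ≠ u) (hz_v : z ≠ v) (b : V) :
    MyReach G (U \ AncS T' z) z b ↔ MyReach G (U \ AncS T z) z b := by
  rcases s3 hswap z hz_u hz_v with hc | ⟨hc, hu'⟩ | ⟨hc, hv'⟩
  · have he : AncS T' z = AncS T z := by rw [ancs_eq, ancs_eq, hc]
    rw [he]
  · have hancs : AncS T' z = AncS T z ∪ {v} := by
      rw [ancs_eq, ancs_eq, hc]
      ext w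
      simp only [Set.mem_diff, Set.mem_union, Set.mem_singleton_iff]
      constructor
      · rintro ⟨(hw | rfl), hne⟩
        · exact Or.inl ⟨hw, hne⟩
        · exact Or.inr rfl
      · rintro (⟨hw, hne⟩ | rfl)
        · exact ⟨Or.inl hw, hne⟩
        · exact ⟨Or.inr rfl, fun he => hz_v (Set.mem_singleton_iff.mp he).symm⟩
    have hset : U \ AncS T' z = (U \ AncS T z) \ {v} := by
      rw [hancs]
      ext w
      simp only [Set.mem_diff, Set.mem_union, Set.mem_singleton_iff]
      tauto
    rw [hset]
    constructor
    · exact fun h => myReach_mono Set.diff_subset h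
    · exact fun h => myReach_avoid T (fun w hw => hw.2)
        (c2_v_not_des hswap hz_u hz_v hu') h
  · have hancs : AncS T' z = AncS T z \ {u} := by
      rw [ancs_eq, ancs_eq, hc]
      ext w
      simp only [Set.mem_diff, Set.mem_singleton_iff]
      tauto
    constructor
    · intro h
      have h2 := myReach_avoid T' (fun w hw => hw.2)
        (c3_u_not_des' hswap hz_u hz_v hv') h
      refine myReach_mono ?_ h2
      rintro x ⟨⟨hxU, hxA⟩, hxu⟩
      refine ⟨hxU, fun hx => ?_⟩
      rw [hancs] at hxA
      exact hxA ⟨hx, hxu⟩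
    · refine fun h => myReach_mono ?_ h
      rintro x ⟨hxU, hxA⟩
      refine ⟨hxU, fun hx => ?_⟩
      rw [hancs] at hx
      exact hxA hx.1

lemma set_Su : ∀ (U : Set V), U \ AncS T' u = (U \ AncS T u) \ {v} := by
  intro U
  rw [ancsT'_u hswap, ancsT_u]
  ext w
  simp only [Set.mem_diff, Set.mem_union, Set.mem_singleton_iff]
  tauto

lemma set_Sv' : ∀ (U : Set V), U \ AncS T' v = U \ AncS T u := by
  intro U
  rw [ancsT'_v hswap, ancsT_u]

lemma set_Sv : ∀ (U : Set V), U \ AncS T v = (U \ AncS T u) \ {u} := by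
  intro U
  rw [ancsT_v hswap, ancsT_u]
  ext w
  simp only [Set.mem_diff, Set.mem_union, Set.mem_singleton_iff]
  tauto

end Swap
end
theorem stmt_14 {V : Type*} (G : SimpleGraph V) (hG : G.Connected)
    (T T' : ElimTree G) (u v : V) (hswap : SwapRel T T' u v)
    (U : Set V) (hU : (G.induce U).Connected)
    (TU TU' : ElimTree (G.induce U))
    (hTU : IsProjection T U TU) (hTU' : IsProjection T' U TU') :
    (¬ (u ∈ U ∧ v ∈ U) → TU' = TU) ∧
    (∀ (hu : u ∈ U) (hv : v ∈ U),
      TU' = TU ∨ SwapRel TU TU' ⟨u, hu⟩ ⟨v, hv⟩) := by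
  classical
  have hTUanc : ∀ a b : U, TU.Anc a b ↔
      ((a : V) ≠ (b : V) ∧ MyReach G (U \ AncS T (a : V)) (a : V) (b : V)) :=
    proj_anc_iff hTU
  have hTU'anc : ∀ a b : U, TU'.Anc a b ↔
      ((a : V) ≠ (b : V) ∧ MyReach G (U \ AncS T' (a : V)) (a : V) (b : V)) :=
    proj_anc_iff hTU'
  have hcompT : ∀ a b : U, TU.Anc a b → T.Anc (a : V) (b : V) :=
    fun a b h => ((hTU a b).mp h).1
  have hsubp : ∀ z : V, T.Anc z u → (U \ AncS T u) ⊆ (U \ AncS T z) :=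
    fun z hz x hx => ⟨hx.1, fun hc => hx.2 (anc_sub hz hc)⟩
  -- the no-swap case
  have noswap : (∀ (_ : u ∈ U) (_ : v ∈ U), ¬ MyReach G (U \ AncS T u) u v) → TU' = TU := by
    intro hcond
    apply tree_eq_of_anc
    intro a b
    rw [hTU'anc a b, hTUanc a b]
    rcases Classical.em ((a : V) = u) with hau | hau
    · have huU : u ∈ U := hau ▸ a.2
      rw [hau]
      refine and_congr_right (fun _ => ?_)
      rw [set_Su hswap U]
      constructor
      · exact fun h => myReach_mono Set.diff_subset h
      · intro h
        rcases Classical.em (v ∈ U) with hvU | hvU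
        · refine myReach_transfer h (fun x hx => ⟨myReach_mem_right hx, fun hxv => ?_⟩)
          rw [Set.mem_singleton_iff] at hxv
          exact hcond huU hvU (hxv ▸ hx)
        · rwa [Set.diff_singleton_eq_self (fun hc => hvU hc.1)]
    · rcases Classical.em ((a : V) = v) with hav | hav
      · have hvU : v ∈ U := hav ▸ a.2
        rw [hav]
        refine and_congr_right (fun _ => ?_)
        rw [set_Sv' hswap U, set_Sv hswap U]
        constructor
        · intro h
          rcases Classical.em (u ∈ U) with huU | huU
          · refine myReach_transfer h (fun x hx => ⟨myReach_mem_right hx, fun hxu => ?_⟩)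
            rw [Set.mem_singleton_iff] at hxu
            exact hcond huU hvU (myReach_symm (hxu ▸ hx))
          · rwa [Set.diff_singleton_eq_self (fun hc => huU hc.1)]
        · exact fun h => myReach_mono Set.diff_subset h
      · exact and_congr_right (fun _ => conv_reach hswap U hau hav (b : V))
  refine ⟨fun hnot => noswap (fun hu hv => absurd ⟨hu, hv⟩ hnot), ?_⟩
  intro hu hv
  by_cases hR : MyReach G (U \ AncS T u) u v
  swap
  · exact Or.inl (noswap (fun _ _ => hR))
  right
  set u' : U := ⟨u, hu⟩ with hu'def
  set v' : U := ⟨v, hv⟩ with hv'def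
  have hAncuv : TU.Anc u' v' := (hTUanc u' v').mpr ⟨huv hswap, hR⟩
  have hAncvu : TU'.Anc v' u' := by
    refine (hTU'anc v' u').mpr ⟨(huv hswap).symm, ?_⟩
    show MyReach G (U \ AncS T' v) v u
    rw [set_Sv' hswap U]
    exact myReach_symm hR
  have hvroot : v' ≠ TU.root := fun he => no_anc_root TU u' (he ▸ hAncuv)
  have huroot' : u' ≠ TU'.root := fun he => no_anc_root TU' v' (he ▸ hAncvu)
  -- the SameCompAfter characterization
  have hSCA : ∀ w : U, SameCompAfter TU u' v' w ↔
      MyReach G ((U \ AncS T u) \ {v}) u (w : V) := by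
    intro w
    have h1 : SameCompAfter TU u' v' w ↔
        MyReach G {x : V | ∃ h : x ∈ U, (⟨x, h⟩ : U) ∈ (TU.desSet u' \ {v'})} u (w : V) :=
      Iff.trans Iff.rfl (myReach_di (G := G) (U := U) (W := TU.desSet u' \ {v'})
        (p := u') (q := w))
    rw [h1]
    constructor
    · intro h
      refine myReach_mono ?_ h
      rintro x ⟨hxU, hdes, hnev⟩
      have hxv : x ≠ v := fun hxv => hnev (Subtype.ext hxv)
      rcases Classical.em ((⟨x, hxU⟩ : U) = u') with he | he
      · have hxu : x = u := congrArg Subtype.val he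
        exact ⟨⟨hxU, fun hc => not_anc_self T u (hxu ▸ hc)⟩, hxv⟩
      · have hanc : TU.Anc u' ⟨x, hxU⟩ := ⟨fun hh => he hh.symm, hdes⟩
        obtain ⟨hne2, hre2⟩ := (hTUanc u' ⟨x, hxU⟩).mp hanc
        exact ⟨myReach_mem_right hre2, hxv⟩
    · intro h
      refine myReach_transfer h (fun x hx => ?_)
      have hxm := myReach_mem_right hx
      have hxv : x ≠ v := fun he => hxm.2 he
      refine ⟨hxm.1.1, ?_, fun he => hxv (congrArg Subtype.val he)⟩
      rcases Classical.em (x = u) with he2 | he2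
      · have hxeq : (⟨x, hxm.1.1⟩ : U) = u' := Subtype.ext he2
        rw [hxeq]
        exact mem_desSet_self TU u'
      · have : TU.Anc u' ⟨x, hxm.1.1⟩ := (hTUanc u' ⟨x, hxm.1.1⟩).mpr
          ⟨fun hh => he2 hh.symm, myReach_mono Set.diff_subset hx⟩
        exact this.2
  -- clause 2 : TU.parent v' = u'
  have hclause2 : TU.parent v' = u' := by
    refine parent_unique TU hvroot hAncuv ?_
    intro w hw
    obtain ⟨hwv, hwre⟩ := (hTUanc w v').mp hw
    have hTanc : T.Anc (w : V) v := ⟨hwv, reach_desSet T (fun z hz => hz.2) hwre⟩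
    have hwm : (w : V) ∈ ({u} : Set V) ∪ BSet T u := by rw [← ancsT_v hswap]; exact hTanc
    rcases hwm with hwu | hwB
    · exact Or.inl (Subtype.ext hwu)
    · right
      refine (hTUanc w u').mpr ⟨(anc_of_B hwB).1, ?_⟩
      exact myReach_trans hwre (myReach_symm (myReach_mono (hsubp _ (anc_of_B hwB)) hR))
  -- clause 3 : TU'.parent u' = v'
  have hclause3 : TU'.parent u' = v' := by
    refine parent_unique TU' huroot' hAncvu ?_
    intro w hw
    obtain ⟨hwu, hwre⟩ := (hTU'anc w u').mp hw
    have hTanc : T'.Anc (w : V) u := ⟨hwu, reach_desSet T' (fun z hz => hz.2) hwre⟩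
    have hwm : (w : V) ∈ ({v} : Set V) ∪ BSet T u := by rw [← ancsT'_u hswap]; exact hTanc
    rcases hwm with hwv | hwB
    · exact Or.inl (Subtype.ext hwv)
    · right
      rw [ancs_B_eq hswap hwB] at hwre
      refine (hTU'anc w v').mpr ⟨fun he => v_not_B hswap
        (by rw [← show (w : V) = v from he]; exact hwB), ?_⟩
      show MyReach G (U \ AncS T' (w : V)) (w : V) v
      rw [ancs_B_eq hswap hwB]
      exact myReach_trans hwre (myReach_mono (hsubp _ (anc_of_B hwB)) hR)
  -- clause 4
  have hclause4 : u' = TU.root → TU'.root = v' ∧ TU'.parent v' = v' := by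
    intro hroot
    have hnone : ∀ w, ¬ TU'.Anc w v' := by
      intro w hw
      obtain ⟨hwv, hwre⟩ := (hTU'anc w v').mp hw
      have hTanc : T'.Anc (w : V) v := ⟨hwv, reach_desSet T' (fun z hz => hz.2) hwre⟩
      have hwB : (w : V) ∈ BSet T u := by rw [← ancsT'_v hswap]; exact hTanc
      rw [ancs_B_eq hswap hwB] at hwre
      have hfin : TU.Anc w u' := (hTUanc w u').mpr ⟨(anc_of_B hwB).1,
        myReach_trans hwre (myReach_symm (myReach_mono (hsubp _ (anc_of_B hwB)) hR))⟩
      exact no_anc_root TU w (hroot ▸ hfin)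
    have hr := root_char TU' hnone
    refine ⟨hr.symm, ?_⟩
    rw [hr]
    exact TU'.parent_root
  -- clause 5
  have hclause5 : u' ≠ TU.root → TU'.root = TU.root ∧ TU'.parent v' = TU.parent u' := by
    intro hroot
    have hAncpu : TU.Anc (TU.parent u') u' := anc_parent TU hroot
    obtain ⟨hpu, hpre⟩ := (hTUanc (TU.parent u') u').mp hAncpu
    have hTp : T.Anc ((TU.parent u' : U) : V) u := ⟨hpu, reach_desSet T (fun z hz => hz.2) hpre⟩
    have hpB : ((TU.parent u' : U) : V) ∈ BSet T u := by
      rw [← ancsT_u (T := T) (u := u)]; exact hTp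
    constructor
    · refine (root_char TU' ?_).symm
      intro w hw
      obtain ⟨hwr, hwre⟩ := (hTU'anc w TU.root).mp hw
      rcases Classical.em ((w : V) = u) with hwu | hwu
      · rw [hwu, set_Su hswap U] at hwre
        have hfin : TU.Anc u' TU.root := (hTUanc u' TU.root).mpr
          ⟨fun he => hwr (hwu.trans he), myReach_mono Set.diff_subset hwre⟩
        exact no_anc_root TU u' hfin
      · rcases Classical.em ((w : V) = v) with hwv | hwv
        · rw [hwv, set_Sv' hswap U] at hwre
          have hur : u ≠ ((TU.root : U) : V) := fun he => hroot (Subtype.ext he)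
          exact no_anc_root TU u' ((hTUanc u' TU.root).mpr ⟨hur, myReach_trans hR hwre⟩)
        · have hconv := (conv_reach hswap U hwu hwv _).mp hwre
          exact no_anc_root TU w ((hTUanc w TU.root).mpr ⟨hwr, hconv⟩)
    · have hAncpv : TU'.Anc (TU.parent u') v' := by
        refine (hTU'anc (TU.parent u') v').mpr ⟨fun he => v_not_B hswap
          (by rw [← show ((TU.parent u' : U) : V) = v from he]; exact hpB), ?_⟩
        show MyReach G (U \ AncS T' ((TU.parent u' : U) : V)) ((TU.parent u' : U) : V) v
        rw [ancs_B_eq hswap hpB]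
        exact myReach_trans hpre (myReach_mono (hsubp _ (anc_of_B hpB)) hR)
      have hvroot' : v' ≠ TU'.root := fun he => no_anc_root TU' _ (he ▸ hAncpv)
      refine parent_unique TU' hvroot' hAncpv ?_
      intro w hw
      obtain ⟨hwv, hwre⟩ := (hTU'anc w v').mp hw
      have hTanc : T'.Anc (w : V) v := ⟨hwv, reach_desSet T' (fun z hz => hz.2) hwre⟩
      have hwB : (w : V) ∈ BSet T u := by rw [← ancsT'_v hswap]; exact hTanc
      rw [ancs_B_eq hswap hwB] at hwre
      have hwu : TU.Anc w u' := (hTUanc w u').mpr ⟨(anc_of_B hwB).1,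
        myReach_trans hwre (myReach_symm (myReach_mono (hsubp _ (anc_of_B hwB)) hR))⟩
      rcases anc_min TU hwu with he | hanc
      · exact Or.inl he
      · right
        obtain ⟨hne, hre⟩ := (hTUanc w (TU.parent u')).mp hanc
        refine (hTU'anc w (TU.parent u')).mpr ⟨hne, ?_⟩
        show MyReach G (U \ AncS T' (w : V)) (w : V) ((TU.parent u' : U) : V)
        rw [ancs_B_eq hswap hwB]
        exact hre
  -- clause 6
  have hclause6 : ∀ w : U, w ≠ u' → w ≠ v' →
      ((TU.parent w = v' ∧ SameCompAfter TU u' v' w) → TU'.parent w = u') ∧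
      (¬ (TU.parent w = v' ∧ SameCompAfter TU u' v' w) → TU'.parent w = TU.parent w) := by
    intro w hwu' hwv'
    have hwu : (w : V) ≠ u := fun he => hwu' (Subtype.ext he)
    have hwv : (w : V) ≠ v := fun he => hwv' (Subtype.ext he)
    constructor
    · rintro ⟨hpar, hsca⟩
      have hsca' : MyReach G ((U \ AncS T u) \ {v}) u (w : V) := (hSCA w).mp hsca
      have hAnc'uw : TU'.Anc u' w := by
        refine (hTU'anc u' w).mpr ⟨fun he => hwu he.symm, ?_⟩
        show MyReach G (U \ AncS T' u) u (w : V)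
        rw [set_Su hswap U]
        exact hsca'
      have hwroot' : w ≠ TU'.root := fun he => no_anc_root TU' u' (he ▸ hAnc'uw)
      refine parent_unique TU' hwroot' hAnc'uw ?_
      intro z hz
      obtain ⟨hzw, hzre⟩ := (hTU'anc z w).mp hz
      rcases Classical.em ((z : V) = u) with hzu | hzu
      · exact Or.inl (Subtype.ext hzu)
      rcases Classical.em ((z : V) = v) with hzv | hzv
      · right
        refine (hTU'anc z u').mpr ⟨?_, ?_⟩
        · show (z : V) ≠ u
          rw [hzv]; exact fun he => huv hswap he.symm
        · show MyReach G (U \ AncS T' (z : V)) (z : V) u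
          rw [hzv, set_Sv' hswap U]
          exact myReach_symm hR
      have hwroot : w ≠ TU.root := by
        intro he
        have hpw : TU.parent w = w := by rw [he]; exact TU.parent_root
        exact hwv' (hpw.symm.trans hpar)
      have hAncvw : TU.Anc v' w := hpar ▸ anc_parent TU hwroot
      have hTvw : T.Anc v (w : V) := hcompT v' w hAncvw
      have hT'zw : T'.Anc (z : V) (w : V) := ⟨hzw, reach_desSet T' (fun y hy => hy.2) hzre⟩
      have hzA : (z : V) ∈ ASelf T (w : V) := by
        rcases s4 hswap (w : V) hT'zw.2 with h1 | h1
        · exact h1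
        · exact absurd (Set.mem_singleton_iff.mp h1) hzv
      rcases anc_linear T hTvw.2 hzA with hcase | hcase
      · -- v ∈ desSet z, so z ∈ B
        have hzB : (z : V) ∈ BSet T u := by
          have hm : (z : V) ∈ ASelf T v := hcase
          rw [aselfT_v hswap] at hm
          rcases hm with h1 | h1 | h1
          · exact absurd (Set.mem_singleton_iff.mp h1) hzv
          · exact absurd (Set.mem_singleton_iff.mp h1) hzu
          · exact h1
        right
        rw [ancs_B_eq hswap hzB] at hzre
        refine (hTU'anc z u').mpr ⟨hzu, ?_⟩
        show MyReach G (U \ AncS T' (z : V)) (z : V) u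
        rw [ancs_B_eq hswap hzB]
        have hR2 : MyReach G (U \ AncS T (z : V)) u (w : V) :=
          myReach_mono (fun x hx => hsubp _ (anc_of_B hzB) hx.1) hsca'
        exact myReach_trans hzre (myReach_symm hR2)
      · -- z ∈ desSet v : contradiction
        exfalso
        have hzconv : MyReach G (U \ AncS T (z : V)) (z : V) (w : V) :=
          (conv_reach hswap U hzu hzv _).mp hzre
        have hTUzw : TU.Anc z w := (hTUanc z w).mpr ⟨hzw, hzconv⟩
        rcases anc_min TU hTUzw with he | hanc
        · exact hzv (congrArg Subtype.val (he.trans hpar))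
        · have hTzv : T.Anc (z : V) v := hcompT z v' (hpar ▸ hanc)
          exact hTzv.1 (desSet_antisymm T hcase hTzv.2)
    · intro hnot
      by_cases hwroot : w = TU.root
      · have hnone : ∀ z, ¬ TU'.Anc z w := by
          intro z hz
          obtain ⟨hzw, hzre⟩ := (hTU'anc z w).mp hz
          rcases Classical.em ((z : V) = u) with hzu | hzu
          · rw [hzu, set_Su hswap U] at hzre
            have hfin : TU.Anc u' w := (hTUanc u' w).mpr
              ⟨fun he => hwu he.symm, myReach_mono Set.diff_subset hzre⟩
            exact no_anc_root TU u' (hwroot ▸ hfin)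
          · rcases Classical.em ((z : V) = v) with hzv | hzv
            · rw [hzv, set_Sv' hswap U] at hzre
              have hfin : TU.Anc u' w := (hTUanc u' w).mpr
                ⟨fun he => hwu he.symm, myReach_trans hR hzre⟩
              exact no_anc_root TU u' (hwroot ▸ hfin)
            · have hconv := (conv_reach hswap U hzu hzv _).mp hzre
              exact no_anc_root TU z (hwroot ▸ (hTUanc z w).mpr ⟨hzw, hconv⟩)
        have hr := root_char TU' hnone
        have h1 : TU'.parent w = w := by rw [hr]; exact TU'.parent_root
        have h2 : TU.parent w = w := by rw [hwroot]; exact TU.parent_root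
        rw [h1, h2]
      · have hAncpw : TU.Anc (TU.parent w) w := anc_parent TU hwroot
        obtain ⟨hpw, hpre⟩ := (hTUanc (TU.parent w) w).mp hAncpw
        have hAnc'pw : TU'.Anc (TU.parent w) w := by
          rcases Classical.em (((TU.parent w : U) : V) = u) with hpu | hpu
          · have hnvw : ¬ TU.Anc v' w := by
              intro hvw
              have hpe : TU.parent w = u' := Subtype.ext hpu
              rcases anc_min TU hvw with he | hanc
              · exact huv hswap (congrArg Subtype.val (he.trans hpe)).symm
              · exact anc_antisymm TU hAncuv (hpe ▸ hanc)
            have hnvre : ¬ MyReach G ((U \ AncS T u) \ {u}) v (w : V) := by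
              intro hre
              refine hnvw ((hTUanc v' w).mpr ⟨fun he => hwv he.symm, ?_⟩)
              show MyReach G (U \ AncS T v) v (w : V)
              rw [set_Sv hswap U]
              exact hre
            have hre0 : MyReach G (U \ AncS T u) u (w : V) := by
              have hh := hpre
              rw [hpu] at hh
              exact hh
            have hsplit := myReach_split hre0 hnvre (huv hswap).symm
            refine (hTU'anc (TU.parent w) w).mpr ⟨hpw, ?_⟩
            show MyReach G (U \ AncS T' ((TU.parent w : U) : V)) ((TU.parent w : U) : V) (w : V)
            rw [hpu, set_Su hswap U]
            exact hsplit
          · rcases Classical.em (((TU.parent w : U) : V) = v) with hpv | hpv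
            · refine (hTU'anc (TU.parent w) w).mpr ⟨hpw, ?_⟩
              show MyReach G (U \ AncS T' ((TU.parent w : U) : V)) ((TU.parent w : U) : V) (w : V)
              rw [hpv, set_Sv' hswap U]
              have hh := hpre
              rw [hpv, set_Sv hswap U] at hh
              exact myReach_mono Set.diff_subset hh
            · exact (hTU'anc (TU.parent w) w).mpr ⟨hpw, (conv_reach hswap U hpu hpv _).mpr hpre⟩
        have hwroot' : w ≠ TU'.root := fun he => no_anc_root TU' _ (he ▸ hAnc'pw)
        refine parent_unique TU' hwroot' hAnc'pw ?_
        intro z hz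
        obtain ⟨hzw, hzre⟩ := (hTU'anc z w).mp hz
        rcases Classical.em ((z : V) = u) with hzu | hzu
        · have hzre2 : MyReach G ((U \ AncS T u) \ {v}) u (w : V) := by
            have hh := hzre
            rw [hzu, set_Su hswap U] at hh
            exact hh
          have hTUuw : TU.Anc u' w := (hTUanc u' w).mpr
            ⟨fun he => hwu he.symm, myReach_mono Set.diff_subset hzre2⟩
          rcases anc_min TU hTUuw with he | hanc
          · exact Or.inl ((Subtype.ext hzu).trans he)
          · right
            have hTup : T.Anc u ((TU.parent w : U) : V) := hcompT u' _ hanc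
            rcases Classical.em (((TU.parent w : U) : V) = v) with hpv | hpv
            · exfalso
              exact hnot ⟨Subtype.ext hpv, (hSCA w).mpr hzre2⟩
            · obtain ⟨hpu2, hppre⟩ := (hTUanc u' (TU.parent w)).mp hanc
              have hkey : MyReach G ((U \ AncS T u) \ {v}) u ((TU.parent w : U) : V) := by
                rcases Classical.em (v ∈ AncS T ((TU.parent w : U) : V)) with hvp | hvp
                · have hsub2 : (U \ AncS T ((TU.parent w : U) : V)) ⊆ (U \ AncS T u) \ {v} := by
                    intro x hx
                    refine ⟨⟨hx.1, fun hc => hx.2 (anc_sub hTup hc)⟩, fun hc => hx.2 ?_⟩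
                    rw [Set.mem_singleton_iff] at hc
                    exact hc ▸ hvp
                  exact myReach_trans hzre2 (myReach_mono hsub2 (myReach_symm hpre))
                · have hvdes : v ∉ T.desSet ((TU.parent w : U) : V) := by
                    intro hd
                    have hm : ((TU.parent w : U) : V) ∈ ASelf T v := hd
                    rw [aselfT_v hswap] at hm
                    rcases hm with h1 | h1 | h1
                    · exact hpv (Set.mem_singleton_iff.mp h1)
                    · exact hTup.1 (Set.mem_singleton_iff.mp h1).symm
                    · exact anc_antisymm T hTup (anc_of_B h1)
                  have hpav := myReach_avoid T (fun y hy => hy.2) hvdes hpre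
                  have hsub3 : (U \ AncS T ((TU.parent w : U) : V)) \ {v} ⊆
                      (U \ AncS T u) \ {v} := by
                    intro x hx
                    exact ⟨⟨hx.1.1, fun hc => hx.1.2 (anc_sub hTup hc)⟩, hx.2⟩
                  exact myReach_trans hzre2 (myReach_mono hsub3 (myReach_symm hpav))
              refine (hTU'anc z (TU.parent w)).mpr ⟨?_, ?_⟩
              · show (z : V) ≠ ((TU.parent w : U) : V)
                rw [hzu]; exact hpu2
              · show MyReach G (U \ AncS T' (z : V)) (z : V) ((TU.parent w : U) : V)
                rw [hzu, set_Su hswap U]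
                exact hkey
        · rcases Classical.em ((z : V) = v) with hzv | hzv
          · have hzre2 : MyReach G (U \ AncS T u) v (w : V) := by
              have hh := hzre
              rw [hzv, set_Sv' hswap U] at hh
              exact hh
            have hTUuw : TU.Anc u' w := (hTUanc u' w).mpr
              ⟨fun he => hwu he.symm, myReach_trans hR hzre2⟩
            rcases anc_min TU hTUuw with he | hanc
            · right
              have hzv' : z = v' := Subtype.ext hzv
              rw [hzv', ← he]
              exact hAncvu
            · rcases Classical.em (((TU.parent w : U) : V) = v) with hpv | hpv
              · exact Or.inl (Subtype.ext (hzv.trans hpv.symm))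
              · right
                obtain ⟨hpu2, hppre⟩ := (hTUanc u' (TU.parent w)).mp hanc
                refine (hTU'anc z (TU.parent w)).mpr ⟨?_, ?_⟩
                · show (z : V) ≠ ((TU.parent w : U) : V)
                  rw [hzv]; exact fun he => hpv he.symm
                · show MyReach G (U \ AncS T' (z : V)) (z : V) ((TU.parent w : U) : V)
                  rw [hzv, set_Sv' hswap U]
                  exact myReach_trans (myReach_symm hR) hppre
          · have hzconv : MyReach G (U \ AncS T (z : V)) (z : V) (w : V) :=
              (conv_reach hswap U hzu hzv _).mp hzre
            have hTUzw : TU.Anc z w := (hTUanc z w).mpr ⟨hzw, hzconv⟩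
            rcases anc_min TU hTUzw with he | hanc
            · exact Or.inl he
            · right
              obtain ⟨hne, hre⟩ := (hTUanc z (TU.parent w)).mp hanc
              exact (hTU'anc z (TU.parent w)).mpr ⟨hne, (conv_reach hswap U hzu hzv _).mpr hre⟩
  exact ⟨fun he => huv hswap (congrArg Subtype.val he), hclause2, hclause3,
    hclause4, hclause5, hclause6⟩
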